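/- Let H be a (multiplicatively written) monoid and let A and S be subsets of H with 1_H ∉ A ∪ S. Then the following are equivalent: (a) every element of S factors as a non-empty product of elements of A; (b) there exists a strongly artinian preorder ≼ on H such that every x ∈ S is a ≼-non-unit, and an element a ∈ H is a ≼-irreducible if and only if it is a ≼-quark, if and only if a ∈ A; (c) there exists an artinian preorder ≼ on H such that every x ∈ S is a ≼-non-unit and every ≼-irreducible is an element of A. -/

import Mathlib

open Pointwise

namespace FactPaper

/-- `u` is a `≼`-unit for the preorder-like relation `r` on a monoid. -/
def RUnit {M : Type*} [Monoid M] (r : M → M → Prop) (u : M) : Prop :=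
  r u 1 ∧ r 1 u

/-- `u` is a `≼`-non-unit. -/
def RNonUnit {M : Type*} [Monoid M] (r : M → M → Prop) (u : M) : Prop :=
  ¬ RUnit r u

/-- The strict part `≺` of the relation `r`. -/
def RLt {M : Type*} (r : M → M → Prop) (x y : M) : Prop :=
  r x y ∧ ¬ r y x

/-- `a` is a `≼`-irreducible. -/
def RIrred {M : Type*} [Monoid M] (r : M → M → Prop) (a : M) : Prop :=
  RNonUnit r a ∧
    ∀ y z : M, RNonUnit r y → RNonUnit r z → RLt r y a → RLt r z a → a ≠ y * z

/-- `a` is a `≼`-atom. -/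
def RAtom {M : Type*} [Monoid M] (r : M → M → Prop) (a : M) : Prop :=
  RNonUnit r a ∧ ∀ y z : M, RNonUnit r y → RNonUnit r z → a ≠ y * z

/-- `a` is a `≼`-quark. -/
def RQuark {M : Type*} [Monoid M] (r : M → M → Prop) (a : M) : Prop :=
  RNonUnit r a ∧ ¬ ∃ b : M, RNonUnit r b ∧ RLt r b a

/-- The divisibility preorder: `Dvd2 x y` iff `y ∈ M x M`. -/
def Dvd2 {M : Type*} [Monoid M] (x y : M) : Prop :=
  ∃ u v : M, y = u * x * v

/-- The restriction of a relation on `M` to a submonoid `K`. -/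
def SubRel {M : Type*} [Monoid M] (r : M → M → Prop) (K : Submonoid M) (a b : K) : Prop :=
  r (a : M) (b : M)

/-- The preorder `⊑` on words induced by `r`: an injection of indices matching
`r`-equivalent letters. -/
def WordLe {M : Type*} (r : M → M → Prop) (l m : List M) : Prop :=
  ∃ σ : Fin l.length ↪ Fin m.length,
    ∀ i : Fin l.length, r (l.get i) (m.get (σ i)) ∧ r (m.get (σ i)) (l.get i)

/-- `⊑`-equivalence of words. -/
def WordEquiv {M : Type*} (r : M → M → Prop) (l m : List M) : Prop :=
  WordLe r l m ∧ WordLe r m l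

/-- `l` is a `≼`-factorization of `x`: a word of `≼`-irreducibles with product `x`. -/
def IsFac {M : Type*} [Monoid M] (r : M → M → Prop) (x : M) (l : List M) : Prop :=
  (∀ a ∈ l, RIrred r a) ∧ l.prod = x

/-- `l` is a minimal `≼`-factorization of `x`: a `⊑`-minimal `≼`-factorization. -/
def IsMinFac {M : Type*} [Monoid M] (r : M → M → Prop) (x : M) (l : List M) : Prop :=
  IsFac r x l ∧ ∀ m : List M, IsFac r x m → WordLe r m l → WordLe r l m

/-- `l` is an atomic `≼`-factorization of `x`. -/
def IsAtomicFac {M : Type*} [Monoid M] (r : M → M → Prop) (x : M) (l : List M) : Prop :=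
  (∀ a ∈ l, RAtom r a) ∧ l.prod = x

/-- `l` is a minimal atomic `≼`-factorization of `x`. -/
def IsMinAtomicFac {M : Type*} [Monoid M] (r : M → M → Prop) (x : M) (l : List M) : Prop :=
  IsMinFac r x l ∧ ∀ a ∈ l, RAtom r a

/-- Every `≼`-non-unit is a non-empty product of `≼`-irreducibles. -/
def Factorable {M : Type*} [Monoid M] (r : M → M → Prop) : Prop :=
  ∀ x : M, RNonUnit r x →
    ∃ l : List M, l ≠ [] ∧ (∀ a ∈ l, RIrred r a) ∧ l.prod = x

/-- Every `≼`-non-unit is a non-empty product of `≼`-atoms. -/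
def Atomic {M : Type*} [Monoid M] (r : M → M → Prop) : Prop :=
  ∀ x : M, RNonUnit r x →
    ∃ l : List M, l ≠ [] ∧ (∀ a ∈ l, RAtom r a) ∧ l.prod = x

/-- The premonoid `(M, r)` is finitely generated up to units. -/
def IsFGU {M : Type*} [Monoid M] (r : M → M → Prop) : Prop :=
  ∃ A : Set M, A.Finite ∧
    Submonoid.closure
      {w : M | ∃ u a v : M, RUnit r u ∧ a ∈ A ∧ RUnit r v ∧ w = u * a * v} = ⊤

/-- The submonoid generated by the `∣_M`-divisors of `x` (ground monoid of the germ of a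
premonoid at `x`). -/
def GermSub {M : Type*} [Monoid M] (x : M) : Submonoid M :=
  Submonoid.closure {y : M | Dvd2 y x}

/-- Membership in the smallest divisor-closed submonoid containing `x`. -/
inductive InDC {M : Type*} [Monoid M] (x : M) : M → Prop
  | base : InDC x x
  | one : InDC x 1
  | mul {a b : M} : InDC x a → InDC x b → InDC x (a * b)
  | dvd {a b : M} : InDC x b → Dvd2 a b → InDC x a

/-- The smallest divisor-closed submonoid of `M` containing `x`. -/
def DCSub {M : Type*} [Monoid M] (x : M) : Submonoid M where
  carrier := {y : M | InDC x y}
  mul_mem' := fun ha hb => InDC.mul ha hb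
  one_mem' := InDC.one

/-- `(M, r)` is a weakly positive monoid. -/
def WeaklyPositive {M : Type*} [Monoid M] (r : M → M → Prop) : Prop :=
  (∀ x u v : M, RUnit r u → RUnit r v → r (u * x * v) x) ∧
    (∀ x a b : M, r x (a * x * b))

/-- `(M, r)` is locally of finite type (loft). -/
def IsLoft {M : Type*} [Monoid M] (r : M → M → Prop) : Prop :=
  ∀ x : M, RNonUnit r x →
    ∃ A : Set M, A.Finite ∧ A ⊆ {a : M | RIrred r a} ∧
      ∀ l : List M, IsFac r x l →
        ∃ m : List M, (∀ a ∈ m, a ∈ A) ∧ WordEquiv r l m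

/-- `(M, r)` is BF-factorable. -/
def IsBFFactorable {M : Type*} [Monoid M] (r : M → M → Prop) : Prop :=
  ∀ x : M, RNonUnit r x →
    {n : ℕ | ∃ l : List M, IsFac r x l ∧ l.length = n}.Finite ∧
      {n : ℕ | ∃ l : List M, IsFac r x l ∧ l.length = n}.Nonempty

/-- `(M, r)` is BmF-factorable. -/
def IsBmFFactorable {M : Type*} [Monoid M] (r : M → M → Prop) : Prop :=
  ∀ x : M, RNonUnit r x →
    {n : ℕ | ∃ l : List M, IsMinFac r x l ∧ l.length = n}.Finite ∧
      {n : ℕ | ∃ l : List M, IsMinFac r x l ∧ l.length = n}.Nonempty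

/-- `(M, r)` is FF-factorable: modulo `⊑`-equivalence, every `≼`-non-unit has finitely
many (and at least one) `≼`-factorizations. -/
def IsFFFactorable {M : Type*} [Monoid M] (r : M → M → Prop) : Prop :=
  ∀ x : M, RNonUnit r x →
    (∃ l : List M, IsFac r x l) ∧
      ∃ F : Set (List M), F.Finite ∧
        ∀ l : List M, IsFac r x l → ∃ m ∈ F, IsFac r x m ∧ WordEquiv r l m

/-- `(M, r)` is FmF-factorable. -/
def IsFmFFactorable {M : Type*} [Monoid M] (r : M → M → Prop) : Prop :=
  ∀ x : M, RNonUnit r x →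
    (∃ l : List M, IsMinFac r x l) ∧
      ∃ F : Set (List M), F.Finite ∧
        ∀ l : List M, IsMinFac r x l → ∃ m ∈ F, IsMinFac r x m ∧ WordEquiv r l m

/-- `(M, r)` is FF-atomic. -/
def IsFFAtomic {M : Type*} [Monoid M] (r : M → M → Prop) : Prop :=
  ∀ x : M, RNonUnit r x →
    (∃ l : List M, IsAtomicFac r x l) ∧
      ∃ F : Set (List M), F.Finite ∧
        ∀ l : List M, IsAtomicFac r x l → ∃ m ∈ F, IsAtomicFac r x m ∧ WordEquiv r l m

/-- `(M, r)` is FmF-atomic. -/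
def IsFmFAtomic {M : Type*} [Monoid M] (r : M → M → Prop) : Prop :=
  ∀ x : M, RNonUnit r x →
    (∃ l : List M, IsMinAtomicFac r x l) ∧
      ∃ F : Set (List M), F.Finite ∧
        ∀ l : List M, IsMinAtomicFac r x l → ∃ m ∈ F, IsMinAtomicFac r x m ∧ WordEquiv r l m



section Stmt0Aux

variable {H : Type*} [Monoid H]

open Classical

/-- The minimal length of a non-empty `A`-factorization of `x` (0 if `x = 1` or none). -/
noncomputable def rho (A : Set H) (x : H) : ℕ :=
  if x = 1 then 0
  else sInf {n | ∃ l : List H, l ≠ [] ∧ (∀ a ∈ l, a ∈ A) ∧ l.prod = x ∧ l.length = n}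

lemma rho_one (A : Set H) : rho A (1 : H) = 0 := by
  unfold rho
  simp

lemma rho_le (A : Set H) {x : H} (hx : x ≠ 1) {l : List H} (h0 : l ≠ [])
    (h2 : ∀ a ∈ l, a ∈ A) (h3 : l.prod = x) : rho A x ≤ l.length := by
  unfold rho
  rw [if_neg hx]
  exact Nat.sInf_le ⟨l, h0, h2, h3, rfl⟩

lemma exists_of_rho_pos (A : Set H) {x : H} (h : 0 < rho A x) :
    ∃ l : List H, l ≠ [] ∧ (∀ a ∈ l, a ∈ A) ∧ l.prod = x ∧ l.length = rho A x := by
  by_cases hx : x = 1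
  · rw [hx, rho_one] at h
    exact absurd h (lt_irrefl 0)
  · unfold rho at h ⊢
    rw [if_neg hx] at h ⊢
    have hne : {n | ∃ l : List H, l ≠ [] ∧ (∀ a ∈ l, a ∈ A) ∧ l.prod = x ∧
        l.length = n}.Nonempty := by
      by_contra hemp
      rw [Set.not_nonempty_iff_eq_empty] at hemp
      rw [hemp, Nat.sInf_empty] at h
      exact absurd h (lt_irrefl 0)
    exact Nat.sInf_mem hne

lemma rho_pos (A : Set H) {x : H} (hx : x ≠ 1) {l : List H} (h0 : l ≠ [])
    (h2 : ∀ a ∈ l, a ∈ A) (h3 : l.prod = x) : 0 < rho A x := by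
  rcases Nat.eq_zero_or_pos (rho A x) with h | h
  · exfalso
    have hne : {n | ∃ l : List H, l ≠ [] ∧ (∀ a ∈ l, a ∈ A) ∧ l.prod = x ∧
        l.length = n}.Nonempty := ⟨l.length, l, h0, h2, h3, rfl⟩
    have hmem := Nat.sInf_mem hne
    unfold rho at h
    rw [if_neg hx] at h
    rw [h] at hmem
    obtain ⟨l', hl0, -, -, hl4⟩ := hmem
    exact hl0 (List.length_eq_zero_iff.mp hl4)
  · exact h

lemma rho_of_mem (A : Set H) (h1A : (1 : H) ∉ A) {a : H} (ha : a ∈ A) : rho A a = 1 := by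
  have hne : a ≠ 1 := by rintro rfl; exact h1A ha
  have h0 : ([a] : List H) ≠ [] := by simp
  have h2 : ∀ b ∈ ([a] : List H), b ∈ A := by
    intro b hb; rw [List.mem_singleton] at hb; subst hb; exact ha
  have h3 : ([a] : List H).prod = a := by simp
  have := rho_le A hne h0 h2 h3
  have := rho_pos A hne h0 h2 h3
  simp only [List.length_singleton] at *
  omega

lemma mem_of_rho_eq_one (A : Set H) {a : H} (h : rho A a = 1) : a ∈ A := by
  have hpos : 0 < rho A a := by omega
  obtain ⟨l, h0, h2, h3, h4⟩ := exists_of_rho_pos A hpos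
  rw [h] at h4
  obtain ⟨b, rfl⟩ := List.length_eq_one_iff.mp h4
  have : b = a := by simpa using h3
  subst this
  exact h2 b (List.mem_singleton_self b)

/-- The abstract factorization theorem: over an artinian relation, every non-unit is a
non-empty product of irreducibles. -/
lemma artinian_factorable {M : Type*} [Monoid M] (r : M → M → Prop)
    (hart : ¬ ∃ f : ℕ → M, ∀ n : ℕ, RLt r (f (n + 1)) (f n)) (x : M) (hx : RNonUnit r x) :
    ∃ l : List M, l ≠ [] ∧ (∀ a ∈ l, RIrred r a) ∧ l.prod = x := by
  classical
  by_contra hbad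
  set P : M → Prop := fun y =>
    RNonUnit r y ∧ ¬ ∃ l : List M, l ≠ [] ∧ (∀ a ∈ l, RIrred r a) ∧ l.prod = y with hP
  have hPx : P x := ⟨hx, hbad⟩
  have step : ∀ y, P y → ∃ z, P z ∧ RLt r z y := by
    rintro y ⟨hynu, hynf⟩
    have hyirr : ¬ RIrred r y := by
      intro hi
      refine hynf ⟨[y], by simp, ?_, by simp⟩
      intro a ha; rw [List.mem_singleton] at ha; subst ha; exact hi
    unfold RIrred at hyirr
    push_neg at hyirr
    obtain ⟨u, v, hu, hv, hul, hvl, huv⟩ := hyirr hynu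
    by_cases hPu : P u
    · exact ⟨u, hPu, hul⟩
    by_cases hPv : P v
    · exact ⟨v, hPv, hvl⟩
    exfalso
    simp only [hP, not_and, not_not] at hPu hPv
    obtain ⟨lu, hlu0, hlu1, hlu2⟩ := hPu hu
    obtain ⟨lv, hlv0, hlv1, hlv2⟩ := hPv hv
    refine hynf ⟨lu ++ lv, by simp [hlu0], ?_, by rw [List.prod_append, hlu2, hlv2, ← huv]⟩
    intro a ha
    rcases List.mem_append.mp ha with h | h
    · exact hlu1 a h
    · exact hlv1 a h
  choose g hg1 hg2 using step
  let f : ℕ → {y : M // P y} :=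
    fun n => Nat.rec ⟨x, hPx⟩ (fun _ p => ⟨g p.1 p.2, hg1 p.1 p.2⟩) n
  exact hart ⟨fun n => (f n).1, fun n => hg2 (f n).1 (f n).2⟩

end Stmt0Aux

/-- Proposition: converse to the abstract factorization theorem.
For a monoid `H` and subsets `A S ⊆ H` with `1 ∉ A ∪ S`, the following are equivalent:
(a) every element of `S` factors as a non-empty product of elements of `A`;
(b) there is a strongly artinian preorder `r` on `H` such that every `x ∈ S` is an
`r`-non-unit and the `r`-irreducibles = the `r`-quarks = the elements of `A`;
(c) there is an artinian preorder `r` on `H` such that every `x ∈ S` is an `r`-non-unit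
and every `r`-irreducible lies in `A`. -/
theorem stmt0 {H : Type*} [Monoid H] (A S : Set H) (h1 : (1 : H) ∉ A ∪ S) :
    List.TFAE
      [ ∀ x ∈ S, ∃ l : List H, l ≠ [] ∧ (∀ a ∈ l, a ∈ A) ∧ l.prod = x,
        ∃ r : H → H → Prop, Reflexive r ∧ Transitive r ∧
          (∀ x : H, ∃ N : ℕ, ∀ (n : ℕ) (f : ℕ → H), f 0 = x →
            (∀ k < n, RNonUnit r (f k)) →
            (∀ k : ℕ, k + 1 < n → RLt r (f (k + 1)) (f k)) → n ≤ N) ∧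
          (∀ x ∈ S, RNonUnit r x) ∧
          (∀ a : H, (RIrred r a ↔ RQuark r a) ∧ (RIrred r a ↔ a ∈ A)),
        ∃ r : H → H → Prop, Reflexive r ∧ Transitive r ∧
          (¬ ∃ f : ℕ → H, ∀ n : ℕ, RLt r (f (n + 1)) (f n)) ∧
          (∀ x ∈ S, RNonUnit r x) ∧ (∀ a : H, RIrred r a → a ∈ A) ] := by
  classical
  have h1A : (1 : H) ∉ A := fun h => h1 (Or.inl h)
  have h1S : (1 : H) ∉ S := fun h => h1 (Or.inr h)
  tfae_have 1 → 2 := by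
    intro ha
    set r : H → H → Prop := fun x y => rho A x ≤ rho A y with hr
    have hnuiff : ∀ u : H, RNonUnit r u ↔ 0 < rho A u := by
      intro u
      unfold RNonUnit RUnit
      simp only [hr, rho_one]
      omega
    have hltiff : ∀ x y : H, RLt r x y ↔ rho A x < rho A y := by
      intro x y
      unfold RLt
      simp only [hr]
      omega
    have hAirr : ∀ a : H, RIrred r a ↔ a ∈ A := by
      intro a
      constructor
      · rintro ⟨hanu, hfac⟩
        have hpos : 0 < rho A a := (hnuiff a).1 hanu
        by_contra haA
        have h2le : 2 ≤ rho A a := by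
          by_contra hlt
          exact haA (mem_of_rho_eq_one A (by omega))
        obtain ⟨l, h0, h2, h3, h4⟩ := exists_of_rho_pos A hpos
        match l, h0 with
        | b :: t, _ =>
          have hb : b ∈ A := h2 b List.mem_cons_self
          have hrb : rho A b = 1 := rho_of_mem A h1A hb
          have ht0 : t ≠ [] := by
            rintro rfl
            simp only [List.length_cons, List.length_nil] at h4
            omega
          have ht2 : ∀ c ∈ t, c ∈ A := fun c hc => h2 c (List.mem_cons_of_mem b hc)
          have hzne : t.prod ≠ 1 := by
            intro hz
            rw [List.prod_cons, hz, mul_one] at h3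
            subst h3
            exact haA hb
          have hzpos : 0 < rho A t.prod := rho_pos A hzne ht0 ht2 rfl
          have hzle : rho A t.prod ≤ t.length := rho_le A hzne ht0 ht2 rfl
          have hlen : t.length + 1 = rho A a := by
            simpa using h4
          refine hfac b t.prod ((hnuiff b).2 (by omega)) ((hnuiff t.prod).2 hzpos)
            ((hltiff b a).2 (by omega)) ((hltiff t.prod a).2 (by omega)) ?_
          rw [← h3, List.prod_cons]
      · intro haA
        have hra : rho A a = 1 := rho_of_mem A h1A haA
        refine ⟨(hnuiff a).2 (by omega), ?_⟩
        intro y z hy hz hylt _ _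
        have := (hnuiff y).1 hy
        have := (hltiff y a).1 hylt
        omega
    have hAqu : ∀ a : H, RQuark r a ↔ a ∈ A := by
      intro a
      constructor
      · rintro ⟨hanu, hnob⟩
        have hpos : 0 < rho A a := (hnuiff a).1 hanu
        rcases Nat.lt_or_ge (rho A a) 2 with h | h
        · have : rho A a = 1 := by omega
          exact mem_of_rho_eq_one A this
        · exfalso
          obtain ⟨l, h0, h2, h3, h4⟩ := exists_of_rho_pos A hpos
          match l, h0 with
          | b :: t, _ =>
            have hb : b ∈ A := h2 b List.mem_cons_self
            have hrb : rho A b = 1 := rho_of_mem A h1A hb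
            exact hnob ⟨b, (hnuiff b).2 (by omega), (hltiff b a).2 (by omega)⟩
      · intro haA
        have hra : rho A a = 1 := rho_of_mem A h1A haA
        refine ⟨(hnuiff a).2 (by omega), ?_⟩
        rintro ⟨b, hbnu, hblt⟩
        have := (hnuiff b).1 hbnu
        have := (hltiff b a).1 hblt
        omega
    refine ⟨r, fun x => le_refl _, fun x y z h h' => le_trans h h', ?_, ?_, ?_⟩
    · intro x
      refine ⟨rho A x, ?_⟩
      intro n f hf0 hnu hlt
      have key : ∀ k, k < n → rho A (f k) + k ≤ rho A x := by
        intro k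
        induction k with
        | zero => intro _; simp [hf0]
        | succ k ih =>
          intro hk
          have h1k := ih (by omega)
          have hl := hlt k hk
          rw [hltiff] at hl
          omega
      rcases Nat.eq_zero_or_pos n with rfl | hn
      · omega
      · have hk := key (n - 1) (by omega)
        have := (hnuiff (f (n - 1))).1 (hnu (n - 1) (by omega))
        omega
    · intro x hx
      have hxne : x ≠ 1 := by rintro rfl; exact h1S hx
      obtain ⟨l, h0, h2, h3⟩ := ha x hx
      exact (hnuiff x).2 (rho_pos A hxne h0 h2 h3)
    · intro a
      exact ⟨(hAirr a).trans (hAqu a).symm, hAirr a⟩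
  tfae_have 2 → 3 := by
    rintro ⟨r, hrefl, htrans, hheight, hS, hAI⟩
    refine ⟨r, hrefl, htrans, ?_, hS, fun a ha => (hAI a).2.mp ha⟩
    rintro ⟨f, hf⟩
    have hchain : ∀ i k : ℕ, r (f (i + k)) (f i) := by
      intro i k
      induction k with
      | zero => exact hrefl _
      | succ k ih => exact htrans (hf (i + k)).1 ih
    have key : ∀ g : ℕ → H, (∀ n, RLt r (g (n + 1)) (g n)) →
        (∀ n, RNonUnit r (g n)) → False := by
      intro g hg hgnu
      obtain ⟨N, hN⟩ := hheight (g 0)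
      have := hN (N + 1) g rfl (fun k _ => hgnu k) (fun k _ => hg k)
      omega
    by_cases hall : ∀ n, RNonUnit r (f n)
    · exact key f hf hall
    · push_neg at hall
      obtain ⟨i, hi⟩ := hall
      rw [RNonUnit, not_not] at hi
      have hafter : ∀ k, RNonUnit r (f (i + 1 + k)) := by
        intro k hu
        have h1' : r (f i) (f (i + 1 + k)) := htrans hi.1 hu.2
        have h2' : r (f (i + 1 + k)) (f (i + 1)) := hchain (i + 1) k
        exact (hf i).2 (htrans h1' h2')
      exact key (fun k => f (i + 1 + k)) (fun k => hf (i + 1 + k)) hafter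
  tfae_have 3 → 1 := by
    rintro ⟨r, hrefl, htrans, hart, hS, hAI⟩
    intro x hx
    obtain ⟨l, h0, h2, h3⟩ := artinian_factorable r hart x (hS x hx)
    exact ⟨l, h0, fun a ha => hAI a (h2 a ha), h3⟩
  tfae_finish


end FactPaper
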